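/- Every weakly closed finite simple graph G is perfect: for every subset W of the vertex set of G, the chromatic number of the induced subgraph G[W] equals the clique number of G[W]. -/

import Mathlib

section Dilworth

set_option linter.unusedSectionVars false

variable {α : Type*}

/-- `T` is an antichain for the relation `r`. -/
def ACon (r : α → α → Prop) (T : Finset α) : Prop := ∀ a ∈ T, ∀ b ∈ T, a ≠ b → ¬ r a b

open Classical in
/-- The width of `S`: the maximal size of an `r`-antichain contained in `S`. -/
noncomputable def rwidth (r : α → α → Prop) (S : Finset α) : ℕ :=
  (S.powerset.filter (fun T => ACon r T)).sup Finset.card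

lemma le_rwidth (r : α → α → Prop) {S T : Finset α} (hTS : T ⊆ S) (hT : ACon r T) :
    T.card ≤ rwidth r S := by
  classical
  exact Finset.le_sup (by simp [Finset.mem_filter, Finset.mem_powerset, hTS, hT])

lemma exists_rwidth (r : α → α → Prop) (S : Finset α) :
    ∃ T, T ⊆ S ∧ ACon r T ∧ T.card = rwidth r S := by
  classical
  have hne : (S.powerset.filter (fun T => ACon r T)).Nonempty := by
    refine ⟨∅, ?_⟩
    exact Finset.mem_filter.2 ⟨Finset.mem_powerset.2 (Finset.empty_subset _), by simp [ACon]⟩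
  obtain ⟨T, hT, hEq⟩ := Finset.exists_mem_eq_sup _ hne Finset.card
  simp only [Finset.mem_filter, Finset.mem_powerset] at hT
  exact ⟨T, hT.1, hT.2, by rw [rwidth]; exact hEq.symm⟩

lemma rwidth_mono (r : α → α → Prop) {S S' : Finset α} (h : S ⊆ S') :
    rwidth r S ≤ rwidth r S' := by
  obtain ⟨T, hTS, hT, hcard⟩ := exists_rwidth r S
  calc rwidth r S = T.card := hcard.symm
    _ ≤ rwidth r S' := le_rwidth r (hTS.trans h) hT

lemma exists_rmax (r : α → α → Prop) (htr : Transitive r) (has : ∀ a b, r a b → ¬ r b a)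
    {B : Finset α} (hB : B.Nonempty) : ∃ y ∈ B, ∀ z ∈ B, ¬ r y z := by
  classical
  obtain ⟨y, hy, hmax⟩ := B.exists_max_image (fun y => (B.filter (fun x => r x y)).card) hB
  refine ⟨y, hy, fun z hz hryz => ?_⟩
  have hss : B.filter (fun x => r x y) ⊂ B.filter (fun x => r x z) := by
    refine Finset.ssubset_def.2 ⟨fun x hx => ?_, fun hsub => ?_⟩
    · simp only [Finset.mem_filter] at hx ⊢
      exact ⟨hx.1, htr hx.2 hryz⟩
    · have : y ∈ B.filter (fun x => r x y) := hsub (by simp [hy, hryz])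
      simp only [Finset.mem_filter] at this
      exact has y y this.2 this.2
  exact absurd (hmax z hz) (not_le.2 (Finset.card_lt_card hss))

/-- Dilworth's theorem, cover form: a finite set can be covered by `rwidth` many chains. -/
lemma exists_chainCover (r : α → α → Prop) (htr : Transitive r)
    (has : ∀ a b, r a b → ¬ r b a) (S : Finset α) :
    ∃ c : α → ℕ, (∀ a ∈ S, c a < rwidth r S) ∧
      (∀ a ∈ S, ∀ b ∈ S, c a = c b → a = b ∨ r a b ∨ r b a) := by
  classical
  induction S using Finset.strongInduction with
  | _ S IH =>
  rcases S.eq_empty_or_nonempty with rfl | hSne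
  · exact ⟨fun _ => 0, by simp, by simp⟩
  obtain ⟨a, haS, hamax⟩ := exists_rmax r htr has hSne
  set S' := S.erase a with hS'
  obtain ⟨c', hc'lt, hc'chain⟩ := IH S' (Finset.erase_ssubset haS)
  set d := rwidth r S' with hd
  rcases Nat.eq_zero_or_pos d with hd0 | hdpos
  · -- S' is empty, S = {a}
    have hS'e : S' = ∅ := by
      by_contra hne
      obtain ⟨y, hy⟩ := Finset.nonempty_of_ne_empty hne
      have h1 : ({y} : Finset α).card ≤ d :=
        le_rwidth r (Finset.singleton_subset_iff.2 hy) (by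
          intro u hu v hv huv
          simp only [Finset.mem_singleton] at hu hv
          exact absurd (hu.trans hv.symm) huv)
      simp [hd0] at h1
    have hall : ∀ b ∈ S, b = a := by
      intro b hb
      by_contra hba
      have : b ∈ S' := Finset.mem_erase.2 ⟨hba, hb⟩
      simp [hS'e] at this
    have hw1 : 1 ≤ rwidth r S := by
      have := le_rwidth r (Finset.singleton_subset_iff.2 haS) (T := {a}) (by
        intro u hu v hv huv
        simp only [Finset.mem_singleton] at hu hv
        exact absurd (hu.trans hv.symm) huv)
      simpa using this
    exact ⟨fun _ => 0, fun b hb => lt_of_lt_of_le Nat.one_pos hw1,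
      fun x hx y hy _ => Or.inl ((hall x hx).trans (hall y hy).symm)⟩
  -- d ≥ 1
  have hwS : d ≤ rwidth r S := rwidth_mono r (Finset.erase_subset _ _)
  -- every d-antichain in S' hits every color class
  have hinj : ∀ T : Finset α, T ⊆ S' → ACon r T → ∀ x ∈ T, ∀ y ∈ T, c' x = c' y → x = y := by
    intro T hTS hT x hx y hy hxy
    rcases hc'chain x (hTS hx) y (hTS hy) hxy with h | h | h
    · exact h
    · by_contra hne; exact absurd h (hT x hx y hy hne)
    · by_contra hne; exact absurd h (hT y hy x hx (Ne.symm hne))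
  have hhit : ∀ T : Finset α, T ⊆ S' → ACon r T → T.card = d →
      ∀ i < d, ∃ z ∈ T, c' z = i := by
    intro T hTS hT hcard i hi
    have himg : T.image c' = Finset.range d := by
      apply Finset.eq_of_subset_of_card_le
      · intro j hj
        simp only [Finset.mem_image] at hj
        obtain ⟨z, hz, rfl⟩ := hj
        exact Finset.mem_range.2 (hc'lt z (hTS hz))
      · rw [Finset.card_range, Finset.card_image_of_injOn (fun x hx y hy => hinj T hTS hT x hx y hy), hcard]
    have : i ∈ T.image c' := himg ▸ Finset.mem_range.2 hi
    simpa only [Finset.mem_image] using this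
  obtain ⟨T0, hT0S, hT0ac, hT0card⟩ := exists_rwidth r S'
  -- the maximal elements a_i
  have hAi : ∀ i, i < d → ∃ y, (y ∈ S' ∧ c' y = i ∧
        ∃ T, T ⊆ S' ∧ ACon r T ∧ T.card = d ∧ y ∈ T) ∧
      ∀ T, T ⊆ S' → ACon r T → T.card = d → ∀ z ∈ T, c' z = i → z = y ∨ r z y := by
    intro i hi
    set A : Finset α := S'.filter (fun y => c' y = i ∧
      ∃ T, T ⊆ S' ∧ ACon r T ∧ T.card = d ∧ y ∈ T) with hA
    have hAne : A.Nonempty := by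
      obtain ⟨z, hz, hzc⟩ := hhit T0 hT0S hT0ac hT0card i hi
      exact ⟨z, Finset.mem_filter.2 ⟨hT0S hz, hzc, T0, hT0S, hT0ac, hT0card, hz⟩⟩
    obtain ⟨y, hyA, hymax⟩ := exists_rmax r htr has hAne
    have hyA' := Finset.mem_filter.1 hyA
    refine ⟨y, ⟨hyA'.1, hyA'.2.1, hyA'.2.2⟩, fun T hTS hT hcard z hz hzc => ?_⟩
    have hzA : z ∈ A := Finset.mem_filter.2 ⟨hTS hz, hzc, T, hTS, hT, hcard, hz⟩
    rcases hc'chain z (hTS hz) y hyA'.1 (hzc.trans hyA'.2.1.symm) with h | h | h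
    · exact Or.inl h
    · exact Or.inr h
    · exact absurd h (hymax z hzA)
  haveI : Inhabited α := ⟨a⟩
  choose! aa haa hmaxa using hAi
  by_cases hcase : ∃ i, i < d ∧ r (aa i) a
  · -- remove the chain through a_i and a
    obtain ⟨i, hid, hria⟩ := hcase
    set K : Finset α := insert a (S'.filter (fun x => c' x = i ∧ (x = aa i ∨ r x (aa i)))) with hK
    have hKchain : ∀ x ∈ K, ∀ y ∈ K, x = y ∨ r x y ∨ r y x := by
      intro x hx y hy
      simp only [hK, Finset.mem_insert, Finset.mem_filter] at hx hy
      rcases hx with rfl | ⟨hxS, hxc, hxr⟩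
      · rcases hy with rfl | ⟨hyS, hyc, hyr⟩
        · exact Or.inl rfl
        · refine Or.inr (Or.inr ?_)
          rcases hyr with rfl | h
          · exact hria
          · exact htr h hria
      · rcases hy with rfl | ⟨hyS, hyc, hyr⟩
        · refine Or.inr (Or.inl ?_)
          rcases hxr with rfl | h
          · exact hria
          · exact htr h hria
        · rcases hc'chain x hxS y hyS (hxc.trans hyc.symm) with h | h | h
          · exact Or.inl h
          · exact Or.inr (Or.inl h)
          · exact Or.inr (Or.inr h)
    set R : Finset α := S \ K with hR
    have hRS' : R ⊆ S' := by
      intro x hx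
      simp only [hR, Finset.mem_sdiff] at hx
      refine Finset.mem_erase.2 ⟨fun hxa => hx.2 ?_, hx.1⟩
      simp [hK, hxa]
    have haK : a ∈ K := by simp [hK]
    have hRss : R ⊂ S :=
      Finset.ssubset_iff_of_subset (Finset.sdiff_subset) |>.2 ⟨a, haS, by simp [hR, haK]⟩
    obtain ⟨c'', hc''lt, hc''chain⟩ := IH R hRss
    have hwR : rwidth r R < d := by
      obtain ⟨T, hTR, hTac, hTcard⟩ := exists_rwidth r R
      have hle : T.card ≤ d := le_rwidth r (hTR.trans hRS') hTac
      rcases lt_or_eq_of_le hle with h | h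
      · omega
      · exfalso
        obtain ⟨z, hzT, hzc⟩ := hhit T (hTR.trans hRS') hTac h i hid
        have hzK : z ∈ K := by
          have := hmaxa i hid T (hTR.trans hRS') hTac h z hzT hzc
          simp only [hK, Finset.mem_insert, Finset.mem_filter]
          exact Or.inr ⟨(hTR.trans hRS') hzT, hzc, this⟩
        have := hTR hzT
        simp only [hR, Finset.mem_sdiff] at this
        exact this.2 hzK
    refine ⟨fun x => if x ∈ K then d - 1 else c'' x, ?_, ?_⟩
    · intro x hx
      by_cases hxK : x ∈ K
      · simp only [hxK, if_pos]
        omega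
      · simp only [hxK, if_neg, if_false]
        have : c'' x < rwidth r R := hc''lt x (by simp [hR, Finset.mem_sdiff, hx, hxK])
        omega
    · intro x hx y hy hxy
      by_cases hxK : x ∈ K <;> by_cases hyK : y ∈ K
      · exact hKchain x hxK y hyK
      · exfalso
        simp only [hxK, hyK, if_pos, if_neg, if_false] at hxy
        have : c'' y < rwidth r R := hc''lt y (by simp [hR, Finset.mem_sdiff, hy, hyK])
        omega
      · exfalso
        simp only [hxK, hyK, if_pos, if_neg, if_false] at hxy
        have : c'' x < rwidth r R := hc''lt x (by simp [hR, Finset.mem_sdiff, hx, hxK])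
        omega
      · simp only [hxK, hyK, if_neg, if_false] at hxy
        exact hc''chain x (by simp [hR, Finset.mem_sdiff, hx, hxK]) y
          (by simp [hR, Finset.mem_sdiff, hy, hyK]) hxy
  · -- a together with the a_i forms a (d+1)-antichain
    push_neg at hcase
    have haaS' : ∀ i, i < d → aa i ∈ S' := fun i hi => (haa i hi).1
    have haac : ∀ i, i < d → c' (aa i) = i := fun i hi => (haa i hi).2.1
    have haainc : ∀ i, i < d → ∀ j, j < d → i ≠ j → ¬ r (aa i) (aa j) := by
      intro i hi j hj hij hr
      obtain ⟨Tj, hTjS, hTjac, hTjcard, hajTj⟩ := (haa j hj).2.2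
      obtain ⟨z, hzTj, hzc⟩ := hhit Tj hTjS hTjac hTjcard i hi
      have hzaj : r z (aa j) := by
        rcases hmaxa i hi Tj hTjS hTjac hTjcard z hzTj hzc with rfl | h
        · exact hr
        · exact htr h hr
      have hzne : z ≠ aa j := by
        intro heq
        rw [heq, haac j hj] at hzc
        exact hij hzc.symm
      exact hTjac z hzTj (aa j) hajTj hzne hzaj
    -- the big antichain
    set Tstar : Finset α := insert a ((Finset.range d).image aa) with hTstar
    have haimg : a ∉ (Finset.range d).image aa := by
      intro hmem
      simp only [Finset.mem_image, Finset.mem_range] at hmem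
      obtain ⟨i, hi, heq⟩ := hmem
      have := haaS' i hi
      rw [heq] at this
      exact (Finset.mem_erase.1 this).1 rfl
    have hcardT : Tstar.card = d + 1 := by
      rw [hTstar, Finset.card_insert_of_notMem haimg,
        Finset.card_image_of_injOn, Finset.card_range]
      intro i hi j hj hij
      simp only [Finset.coe_range, Set.mem_Iio] at hi hj
      have : c' (aa i) = c' (aa j) := by rw [hij]
      rwa [haac i hi, haac j hj] at this
    have hTac : ACon r Tstar := by
      intro x hx y hy hxy
      simp only [hTstar, Finset.mem_insert, Finset.mem_image, Finset.mem_range] at hx hy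
      rcases hx with rfl | ⟨i, hi, rfl⟩
      · rcases hy with rfl | ⟨j, hj, rfl⟩
        · exact absurd rfl hxy
        · exact hamax (aa j) (Finset.erase_subset _ _ (haaS' j hj))
      · rcases hy with rfl | ⟨j, hj, rfl⟩
        · exact hcase i hi
        · refine haainc i hi j hj (fun hij => hxy ?_)
          rw [hij]
    have hTsub : Tstar ⊆ S := by
      intro x hx
      simp only [hTstar, Finset.mem_insert, Finset.mem_image, Finset.mem_range] at hx
      rcases hx with rfl | ⟨i, hi, rfl⟩
      · exact haS
      · exact Finset.erase_subset _ _ (haaS' i hi)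
    have hwS1 : d + 1 ≤ rwidth r S := by
      have := le_rwidth r hTsub hTac
      omega
    refine ⟨fun x => if x = a then d else c' x, ?_, ?_⟩
    · intro x hx
      by_cases hxa : x = a
      · simp only [hxa, if_pos]
        omega
      · simp only [hxa, if_neg, if_false]
        have : c' x < d := hc'lt x (Finset.mem_erase.2 ⟨hxa, hx⟩)
        omega
    · intro x hx y hy hxy
      by_cases hxa : x = a <;> by_cases hya : y = a
      · exact Or.inl (hxa.trans hya.symm)
      · exfalso
        simp only [hxa, hya, if_pos, if_neg, if_false] at hxy
        have : c' y < d := hc'lt y (Finset.mem_erase.2 ⟨hya, hy⟩)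
        omega
      · exfalso
        simp only [hxa, hya, if_pos, if_neg, if_false] at hxy
        have : c' x < d := hc'lt x (Finset.mem_erase.2 ⟨hxa, hx⟩)
        omega
      · simp only [hxa, hya, if_neg, if_false] at hxy
        exact hc'chain x (Finset.mem_erase.2 ⟨hxa, hx⟩) y (Finset.mem_erase.2 ⟨hya, hy⟩) hxy

end Dilworth


/-- `G` is weakly closed: some labeling of the vertices by `1, …, n` is such that for
every edge `{i, j}` with `i < j` and every `i < k < j`, `{i,k} ∈ E(G)` or `{k,j} ∈ E(G)`. -/
def WeaklyClosed {V : Type*} [Fintype V] (G : SimpleGraph V) : Prop :=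
  ∃ σ : V ≃ Fin (Fintype.card V), ∀ i j k : V,
    G.Adj i j → σ i < σ k → σ k < σ j → G.Adj i k ∨ G.Adj k j

/-- Every weakly closed finite simple graph is perfect: for every subset `W` of vertices,
the chromatic number of the induced subgraph `G[W]` equals its clique number. -/
theorem perfect_of_weaklyClosed {V : Type*} [Fintype V] (G : SimpleGraph V)
    (h : WeaklyClosed G) (W : Set V) :
    (G.induce W).chromaticNumber = ((G.induce W).cliqueNum : ℕ∞) := by

  classical
  obtain ⟨σ, hσ⟩ := h
  haveI : Fintype ↥W := Fintype.ofFinite _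
  set G' := G.induce W with hG'
  have hadj : ∀ x y : ↥W, G'.Adj x y ↔ G.Adj ↑x ↑y := fun x y => Iff.rfl
  set f : ↥W → ℕ := fun w => ((σ ↑w : Fin (Fintype.card V)) : ℕ) with hf
  have hfinj : Function.Injective f := by
    intro x y hxy
    exact Subtype.ext (σ.injective (Fin.ext hxy))
  set r : ↥W → ↥W → Prop := fun x y => f x < f y ∧ ¬ G'.Adj x y with hr
  have htr : Transitive r := by
    rintro x y z ⟨hxy, hnxy⟩ ⟨hyz, hnyz⟩
    refine ⟨hxy.trans hyz, fun hxz => ?_⟩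
    rcases hσ ↑x ↑z ↑y ((hadj x z).1 hxz) (by rwa [Fin.lt_def]) (by rwa [Fin.lt_def]) with h1 | h1
    · exact hnxy ((hadj x y).2 h1)
    · exact hnyz ((hadj y z).2 h1)
  have has : ∀ x y, r x y → ¬ r x y → False := fun _ _ h1 h2 => h2 h1
  have hasym : ∀ x y, r x y → ¬ r y x := by
    rintro x y ⟨h1, _⟩ ⟨h2, _⟩
    exact absurd h2 (not_lt.2 h1.le)
  obtain ⟨c, hclt, hchain⟩ := exists_chainCover r htr hasym Finset.univ
  -- width equals the clique number
  have hwid : rwidth r Finset.univ = G'.cliqueNum := by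
    apply le_antisymm
    · obtain ⟨T, _, hTac, hTcard⟩ := exists_rwidth r Finset.univ
      have hclique : G'.IsClique ↑T := by
        intro x hx y hy hxy
        have h1 := hTac x hx y hy hxy
        have h2 := hTac y hy x hx (Ne.symm hxy)
        have hfne : f x ≠ f y := fun hEq => hxy (hfinj hEq)
        rcases lt_or_gt_of_ne hfne with hlt | hlt
        · by_contra hnadj
          exact h1 ⟨hlt, hnadj⟩
        · by_contra hnadj
          exact h2 ⟨hlt, fun hA => hnadj hA.symm⟩
      calc rwidth r Finset.univ = T.card := hTcard.symm
        _ ≤ G'.cliqueNum := hclique.card_le_cliqueNum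
    · obtain ⟨s, hs⟩ := G'.exists_isNClique_cliqueNum
      have hac : ACon r s := by
        intro x hx y hy hxy hrxy
        exact hrxy.2 (hs.isClique (Finset.mem_coe.2 hx) (Finset.mem_coe.2 hy) hxy)
      calc G'.cliqueNum = s.card := hs.card_eq.symm
        _ ≤ rwidth r Finset.univ := le_rwidth r (Finset.subset_univ s) hac
  -- the chain cover gives a coloring
  have hcol : G'.Colorable G'.cliqueNum := by
    refine ⟨SimpleGraph.Coloring.mk
      (fun v => ⟨c v, hwid ▸ hclt v (Finset.mem_univ v)⟩) ?_⟩
    intro v w hvw hEq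
    have hcvw : c v = c w := congrArg Fin.val hEq
    rcases hchain v (Finset.mem_univ v) w (Finset.mem_univ w) hcvw with h1 | h1 | h1
    · exact G'.loopless.irrefl w (h1 ▸ hvw)
    · exact h1.2 hvw
    · exact h1.2 hvw.symm
  have h1 : G'.chromaticNumber ≤ (G'.cliqueNum : ℕ∞) := hcol.chromaticNumber_le
  refine le_antisymm h1 ?_
  have hne : G'.chromaticNumber ≠ ⊤ := (h1.trans_lt (WithTop.coe_lt_top _)).ne
  set m := G'.chromaticNumber.toNat with hm
  have hχ : G'.chromaticNumber = (m : ℕ∞) := (ENat.coe_toNat hne).symm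
  rw [hχ, Nat.cast_le]
  by_contra hlt
  push_neg at hlt
  have hcolm : G'.Colorable m := G'.colorable_chromaticNumber_of_fintype
  have hfree : G'.CliqueFree (m + 1) := hcolm.cliqueFree (Nat.lt_succ_self m)
  obtain ⟨s, hs⟩ := G'.exists_isNClique_cliqueNum
  obtain ⟨t, hts, htcard⟩ := Finset.exists_subset_card_eq (show m + 1 ≤ s.card by have := hs.card_eq; omega)
  exact hfree t ⟨hs.isClique.subset (by exact_mod_cast hts), htcard⟩
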